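/- Let θ ∈ (0,1/2), β > 0, and let W : [0,∞) → [0,∞) be differentiable, nonincreasing, with W(t) → 0 as t → ∞, and satisfying W(t)^{2(1−θ)} ≤ −C (d/dt)W(t) + C e^{−2t/β} for all t ≥ t₀, for some constants C > 0, t₀ ≥ 0. Then there exists C' > 0 such that 0 ≤ W(t) ≤ C' (1+t)^{−1/(1−2θ)} for all t ≥ 0. -/

import Mathlib

set_option maxHeartbeats 1000000

lemma aux_pow_add (a b p : ℝ) (ha : 0 ≤ a) (hb : 0 ≤ b) (hp : 1 ≤ p) :
    (a + b) ^ p ≤ 2 ^ (p - 1) * (a ^ p + b ^ p) := by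
  lift a to NNReal using ha
  lift b to NNReal using hb
  have h := NNReal.rpow_add_le_mul_rpow_add_rpow a b hp
  exact_mod_cast h

lemma aux_deriv_nonpos (W W' : ℝ → ℝ) (hmono : AntitoneOn W (Set.Ici (0:ℝ)))
    (t : ℝ) (ht : 0 ≤ t) (hd : HasDerivAt W (W' t) t) : W' t ≤ 0 := by
  have hs : Filter.Tendsto (slope W t) (nhdsWithin t (Set.Ioi t)) (nhds (W' t)) :=
    (hasDerivAt_iff_tendsto_slope.1 hd).mono_left
      (nhdsWithin_mono t (fun x hx => Set.mem_compl_singleton_iff.2 (ne_of_gt hx)))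
  refine le_of_tendsto hs ?_
  filter_upwards [self_mem_nhdsWithin] with x hx
  have hx' : t < x := hx
  have hWx : W x ≤ W t := hmono (Set.mem_Ici.2 ht) (Set.mem_Ici.2 (ht.trans hx'.le)) hx'.le
  rw [slope_def_field]
  exact div_nonpos_of_nonpos_of_nonneg (by linarith) (by linarith)


/-- Łojasiewicz-type ODE decay: if `W ≥ 0` is nonincreasing on `[0,∞)`,
tends to `0`, and `W^{2(1-θ)} ≤ -C W' + C e^{-2t/β}` for `t ≥ t₀`, then
`W(t) ≤ C'(1+t)^{-1/(1-2θ)}`. -/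
theorem stmt9 (θ β C t₀ : ℝ) (hθ0 : 0 < θ) (hθ : θ < 1/2) (hβ : 0 < β)
    (hC : 0 < C) (ht₀ : 0 ≤ t₀)
    (W W' : ℝ → ℝ)
    (hderiv : ∀ t ≥ (0:ℝ), HasDerivAt W (W' t) t)
    (hnn : ∀ t ≥ (0:ℝ), 0 ≤ W t)
    (hmono : AntitoneOn W (Set.Ici (0:ℝ)))
    (hlim : Filter.Tendsto W Filter.atTop (nhds 0))
    (hineq : ∀ t ≥ t₀, W t ^ (2 * (1 - θ)) ≤ -C * W' t + C * Real.exp (-2 * t / β)) :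
    ∃ C' : ℝ, 0 < C' ∧ ∀ t ≥ (0:ℝ), W t ≤ C' * (1 + t) ^ (-(1 / (1 - 2 * θ))) := by
  set α : ℝ := 2 * (1 - θ) with hα_def
  set γ : ℝ := 1 / (1 - 2 * θ) with hγ_def
  have hα1 : 1 < α := by rw [hα_def]; linarith
  have hαm1 : α - 1 = 1 - 2 * θ := by rw [hα_def]; ring
  have hα0 : 0 < α := by linarith
  have h2θ : 0 < 1 - 2 * θ := by linarith
  have hγpos : 0 < γ := by rw [hγ_def]; positivity
  set T : ℝ := max t₀ 1 with hT_def
  have hT1 : (1:ℝ) ≤ T := le_max_right _ _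
  have hTt₀ : t₀ ≤ T := le_max_left _ _
  have hT0 : (0:ℝ) < T := lt_of_lt_of_le one_pos hT1
  -- enlarged constant
  set C₂ : ℝ := max C ((α * β) ^ α) with hC₂_def
  have hC₂C : C ≤ C₂ := le_max_left _ _
  have hC₂K : (α * β) ^ α ≤ C₂ := le_max_right _ _
  have hC₂pos : 0 < C₂ := lt_of_lt_of_le hC hC₂C
  have hineq2 : ∀ t ≥ T, W t ^ α ≤ -C₂ * W' t + C₂ * Real.exp (-2 * t / β) := by
    intro t ht
    have h1 := hineq t (hTt₀.trans ht)
    have h2 : W' t ≤ 0 := aux_deriv_nonpos W W' hmono t (hT0.le.trans ht)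
      (hderiv t (hT0.le.trans ht))
    have h3 : -C * W' t ≤ -C₂ * W' t := by nlinarith
    have h4 : C * Real.exp (-2 * t / β) ≤ C₂ * Real.exp (-2 * t / β) :=
      mul_le_mul_of_nonneg_right hC₂C (Real.exp_nonneg _)
    linarith
  -- the perturbed function V
  set K : ℝ := α * β with hK_def
  have hKpos : 0 < K := by rw [hK_def]; positivity
  set μ : ℝ := 2 / (α * β) with hμ_def
  have hμpos : 0 < μ := by rw [hμ_def]; positivity
  have hμβ : μ ≤ 2 / β := by
    rw [hμ_def]
    apply div_le_div_of_nonneg_left (by norm_num) hβ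
    nlinarith
  have hμK : μ * K = 2 := by
    rw [hμ_def, hK_def]; field_simp
  have hαμ : α * μ = 2 / β := by
    rw [hμ_def]; field_simp
  set V : ℝ → ℝ := fun t => W t + K * Real.exp (-μ * t) with hV_def
  set V' : ℝ → ℝ := fun t => W' t - μ * K * Real.exp (-μ * t) with hV'_def
  have hVpos : ∀ t ≥ (0:ℝ), 0 < V t := by
    intro t ht
    have := hnn t ht
    have : 0 < K * Real.exp (-μ * t) := by positivity
    simp only [hV_def]
    linarith [hnn t ht]
  have hVd : ∀ t ≥ (0:ℝ), HasDerivAt V (V' t) t := by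
    intro t ht
    have h1 : HasDerivAt (fun s : ℝ => -μ * s) (-μ) t := by
      simpa using (hasDerivAt_id t).const_mul (-μ)
    have h2 : HasDerivAt (fun s : ℝ => K * Real.exp (-μ * s))
        (K * (Real.exp (-μ * t) * -μ)) t := h1.exp.const_mul K
    have h3 := (hderiv t ht).add h2
    refine HasDerivAt.congr_deriv h3 ?_
    simp only [hV'_def]
    ring
  -- key differential inequality for V
  set C₁ : ℝ := 2 ^ (α - 1) * C₂ with hC₁_def
  have hA : (0:ℝ) < 2 ^ (α - 1) := Real.rpow_pos_of_pos two_pos _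
  have hC₁pos : 0 < C₁ := mul_pos hA hC₂pos
  have hVineq : ∀ t ≥ T, V t ^ α ≤ -C₁ * V' t := by
    intro t ht
    have ht0 : (0:ℝ) ≤ t := hT0.le.trans ht
    have e1 : V t ^ α ≤ 2 ^ (α - 1) * (W t ^ α + (K * Real.exp (-μ * t)) ^ α) :=
      aux_pow_add _ _ _ (hnn t ht0) (by positivity) hα1.le
    have e2 : (K * Real.exp (-μ * t)) ^ α = K ^ α * Real.exp (-2 * t / β) := by
      rw [Real.mul_rpow hKpos.le (Real.exp_nonneg _), ← Real.exp_log (Real.exp_pos (-μ*t)),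
        Real.log_exp, ← Real.exp_mul]
      congr 1
      rw [show (-μ * t * α) = -(α * μ) * t by ring, hαμ]
      ring
    have e3 := hineq2 t ht
    have e4 : Real.exp (-2 * t / β) ≤ Real.exp (-μ * t) := by
      apply Real.exp_le_exp.2
      have h := mul_le_mul_of_nonneg_right hμβ ht0
      have h2 : -2 * t / β = -(2 / β * t) := by ring
      rw [h2]
      linarith
    have e5 : Real.exp (-2 * t / β) ≤ Real.exp (-μ * t) := e4
    have eK : K ^ α = (α * β) ^ α := by rw [hK_def]
    have e6 : W t ^ α + (K * Real.exp (-μ * t)) ^ α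
        ≤ -C₂ * W' t + 2 * C₂ * Real.exp (-μ * t) := by
      rw [e2, eK]
      have h7 : (α * β) ^ α * Real.exp (-2 * t / β) ≤ C₂ * Real.exp (-2 * t / β) :=
        mul_le_mul_of_nonneg_right hC₂K (Real.exp_nonneg _)
      nlinarith [Real.exp_nonneg (-2 * t / β), mul_le_mul_of_nonneg_left e4 hC₂pos.le]
    calc V t ^ α ≤ 2 ^ (α - 1) * (W t ^ α + (K * Real.exp (-μ * t)) ^ α) := e1
      _ ≤ 2 ^ (α - 1) * (-C₂ * W' t + 2 * C₂ * Real.exp (-μ * t)) :=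
          mul_le_mul_of_nonneg_left e6 hA.le
      _ = -C₁ * V' t := by
          simp only [hV'_def, hC₁_def]
          rw [show μ * K * Real.exp (-μ * t) = 2 * Real.exp (-μ * t) by rw [hμK]]
          ring
  -- φ = V^{-(α-1)} grows linearly
  set φ : ℝ → ℝ := fun t => V t ^ (-(α - 1)) with hφ_def
  set δ : ℝ := (α - 1) / C₁ with hδ_def
  have hδpos : 0 < δ := div_pos (by linarith) hC₁pos
  have hφd : ∀ t ≥ (0:ℝ), HasDerivAt φ
      (V' t * -(α - 1) * V t ^ (-(α - 1) - 1)) t := by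
    intro t ht
    exact (hVd t ht).rpow_const (Or.inl (ne_of_gt (hVpos t ht)))
  have hφ'ge : ∀ t ≥ T, δ ≤ V' t * -(α - 1) * V t ^ (-(α - 1) - 1) := by
    intro t ht
    have ht0 : (0:ℝ) ≤ t := hT0.le.trans ht
    have hv := hVpos t ht0
    have hVα : 0 < V t ^ α := Real.rpow_pos_of_pos hv α
    have hvi := hVineq t ht
    have hexp : -(α - 1) - 1 = -α := by ring
    rw [hexp, Real.rpow_neg hv.le]
    have hinv : 0 < (V t ^ α)⁻¹ := inv_pos.2 hVα
    have hcan : (V t ^ α)⁻¹ * V t ^ α = 1 := inv_mul_cancel₀ (ne_of_gt hVα)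
    have h1 : V t ^ α / C₁ ≤ -V' t := by
      rw [div_le_iff₀ hC₁pos]
      nlinarith [hvi]
    calc δ = (α - 1) * ((V t ^ α)⁻¹ * (V t ^ α / C₁)) := by
          rw [hδ_def, show (V t ^ α)⁻¹ * (V t ^ α / C₁)
            = ((V t ^ α)⁻¹ * V t ^ α) / C₁ by ring, hcan]
          ring
      _ ≤ (α - 1) * ((V t ^ α)⁻¹ * -V' t) :=
          mul_le_mul_of_nonneg_left (mul_le_mul_of_nonneg_left h1 hinv.le) (by linarith)
      _ = V' t * -(α - 1) * (V t ^ α)⁻¹ := by ring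
  -- ψ = φ - δ t is monotone on [T, ∞)
  have hmonoψ : MonotoneOn (fun t => φ t - δ * t) (Set.Ici T) := by
    have hlin : ∀ t : ℝ, HasDerivAt (fun x : ℝ => δ * x) δ t := by
      intro t
      simpa using (hasDerivAt_id t).const_mul δ
    apply monotoneOn_of_deriv_nonneg (convex_Ici T)
    · intro t ht
      have ht0 : (0:ℝ) ≤ t := hT0.le.trans ht
      exact (((hφd t ht0).sub (hlin t)).continuousAt).continuousWithinAt
    · intro t ht
      rw [interior_Ici] at ht
      have ht0 : (0:ℝ) ≤ t := hT0.le.trans (le_of_lt ht)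
      exact (((hφd t ht0).sub (hlin t)).differentiableAt).differentiableWithinAt
    · intro t ht
      rw [interior_Ici] at ht
      have ht0 : (0:ℝ) ≤ t := hT0.le.trans (le_of_lt ht)
      have hd : HasDerivAt (fun x => φ x - δ * x)
          (V' t * -(α - 1) * V t ^ (-(α - 1) - 1) - δ) t := (hφd t ht0).sub (hlin t)
      rw [hd.deriv]
      have := hφ'ge t (le_of_lt ht)
      linarith
  have hφT : 0 < φ T := Real.rpow_pos_of_pos (hVpos T hT0.le) _
  set ε : ℝ := min δ (φ T / (1 + T)) with hε_def
  have hεpos : 0 < ε := lt_min hδpos (div_pos hφT (by linarith))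
  have hlower : ∀ t ≥ T, ε * (1 + t) ≤ φ t := by
    intro t ht
    have h1 : φ T - δ * T ≤ φ t - δ * t :=
      hmonoψ (Set.mem_Ici.2 le_rfl) (Set.mem_Ici.2 ht) ht
    have h2 : ε * (1 + T) ≤ φ T := by
      have hm := min_le_right δ (φ T / (1 + T))
      have h1T : (0:ℝ) < 1 + T := by linarith
      have : φ T / (1 + T) * (1 + T) = φ T := div_mul_cancel₀ _ (ne_of_gt h1T)
      nlinarith [mul_le_mul_of_nonneg_right hm h1T.le]
    have h3 : ε ≤ δ := min_le_left _ _
    nlinarith [mul_le_mul_of_nonneg_right h3 (sub_nonneg.2 ht)]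
  -- convert linear growth of φ into decay of W
  have hbound1 : ∀ t ≥ T, W t ≤ ε ^ (-γ) * (1 + t) ^ (-γ) := by
    intro t ht
    have ht0 : (0:ℝ) ≤ t := hT0.le.trans ht
    have hv := hVpos t ht0
    have h1t : (0:ℝ) < 1 + t := by linarith
    have hWV : W t ≤ V t := by
      simp only [hV_def]
      nlinarith [Real.exp_pos (-μ * t), hKpos]
    have hεt : 0 < ε * (1 + t) := mul_pos hεpos h1t
    have h2 := hlower t ht
    have h3 : V t = φ t ^ (-γ) := by
      simp only [hφ_def]
      rw [← Real.rpow_mul hv.le]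
      rw [show -(α - 1) * -γ = 1 by rw [hαm1, hγ_def]; field_simp, Real.rpow_one]
    have h4 : φ t ^ (-γ) ≤ (ε * (1 + t)) ^ (-γ) :=
      Real.rpow_le_rpow_of_nonpos hεt h2 (by linarith)
    rw [Real.mul_rpow hεpos.le h1t.le] at h4
    calc W t ≤ V t := hWV
      _ = φ t ^ (-γ) := h3
      _ ≤ ε ^ (-γ) * (1 + t) ^ (-γ) := h4
  -- assemble the final constant
  refine ⟨max (ε ^ (-γ)) ((W 0 + 1) * (1 + T) ^ γ), ?_, ?_⟩
  · exact lt_max_iff.2 (Or.inl (Real.rpow_pos_of_pos hεpos _))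
  · intro t ht
    rcases le_total T t with hc | hc
    · have hb := hbound1 t hc
      have hnng : 0 ≤ (1 + t) ^ (-γ) := Real.rpow_nonneg (by linarith) _
      calc W t ≤ ε ^ (-γ) * (1 + t) ^ (-γ) := hb
        _ ≤ max (ε ^ (-γ)) ((W 0 + 1) * (1 + T) ^ γ) * (1 + t) ^ (-γ) :=
            mul_le_mul_of_nonneg_right (le_max_left _ _) hnng
    · have hW0 : W t ≤ W 0 := hmono (Set.mem_Ici.2 le_rfl) (Set.mem_Ici.2 ht) ht
      have h1t : (0:ℝ) < 1 + t := by linarith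
      have h5 : (1 + T) ^ (-γ) ≤ (1 + t) ^ (-γ) :=
        Real.rpow_le_rpow_of_nonpos h1t (by linarith) (by linarith)
      have h6 : (1 + T) ^ γ * (1 + T) ^ (-γ) = 1 := by
        rw [← Real.rpow_add (by linarith : (0:ℝ) < 1 + T)]
        simp
      have h7 : 0 ≤ (W 0 + 1) * (1 + T) ^ γ :=
        mul_nonneg (by linarith [hnn 0 le_rfl]) (Real.rpow_nonneg (by linarith) _)
      calc W t ≤ W 0 := hW0
        _ ≤ (W 0 + 1) * ((1 + T) ^ γ * (1 + T) ^ (-γ)) := by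
            rw [h6]; linarith [hnn 0 le_rfl]
        _ = (W 0 + 1) * (1 + T) ^ γ * (1 + T) ^ (-γ) := by ring
        _ ≤ (W 0 + 1) * (1 + T) ^ γ * (1 + t) ^ (-γ) :=
            mul_le_mul_of_nonneg_left h5 h7
        _ ≤ max (ε ^ (-γ)) ((W 0 + 1) * (1 + T) ^ γ) * (1 + t) ^ (-γ) :=
            mul_le_mul_of_nonneg_right (le_max_right _ _) (Real.rpow_nonneg h1t.le _)
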